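/- Let n ≥ 2 and X the n×n matrix with diagonal entries 1 and off-diagonal entries −1/(n−1). If r, r' ∈ ℝⁿ both solve X·r = y for the same y, then r − r' is a constant vector, i.e., there exists c ∈ ℝ with r_i − r'_i = c for all i. -/

import Mathlib

theorem stmt_8 (n : ℕ) (hn : 2 ≤ n)
    (X : Matrix (Fin n) (Fin n) ℝ)
    (hdiag : ∀ i, X i i = 1)
    (hoff : ∀ i j, i ≠ j → X i j = -1 / ((n : ℝ) - 1))
    (r r' y : Fin n → ℝ)
    (hr : X.mulVec r = y) (hr' : X.mulVec r' = y) :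
    ∃ c : ℝ, ∀ i, r i - r' i = c := by
  set d : Fin n → ℝ := fun i => r i - r' i with hd
  have hn1 : (1:ℝ) ≤ (n:ℝ) - 1 := by
    have : (2:ℝ) ≤ (n:ℝ) := by exact_mod_cast hn
    linarith
  have hne : ((n:ℝ) - 1) ≠ 0 := by linarith
  have hnne : (n:ℝ) ≠ 0 := by
    have : (2:ℝ) ≤ (n:ℝ) := by exact_mod_cast hn
    linarith
  set S : ℝ := ∑ j, d j with hS
  refine ⟨S / n, fun i => ?_⟩
  have h0 : X.mulVec d = 0 := by
    have : X.mulVec d = X.mulVec r - X.mulVec r' := by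
      ext i
      simp [Matrix.mulVec, dotProduct, hd, mul_sub, Finset.sum_sub_distrib]
    rw [this, hr, hr', sub_self]
  have hi : ∑ j, X i j * d j = 0 := congrFun h0 i
  have hsplit : ∑ j, X i j * d j = d i + (-1 / ((n:ℝ) - 1)) * (S - d i) := by
    rw [← Finset.add_sum_erase _ _ (Finset.mem_univ i), hdiag i, one_mul]
    congr 1
    have : S - d i = ∑ j ∈ Finset.univ.erase i, d j := by
      rw [hS, ← Finset.add_sum_erase _ _ (Finset.mem_univ i)]; ring
    rw [this, Finset.mul_sum]
    apply Finset.sum_congr rfl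
    intro j hj
    rw [hoff i j (Ne.symm (Finset.ne_of_mem_erase hj))]
  rw [hsplit] at hi
  have : d i * ((n:ℝ)) = S := by
    field_simp at hi
    nlinarith [hi]
  show d i = S / n
  field_simp [this]
  exact this
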